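/- Let q ∈ (0,1). There exists a finite family of 3×3 complex matrices (K_n)_{n=−2}^{2}, with ⟨i|K_n|j⟩ = 0 whenever i − j ≠ n, such that: (1) Σ_n K_n† K_n = I₃; (2) Σ_n K_n γ̂ K_n† = γ̂ where γ̂ = diag(1, q, q²)/(1+q+q²); and (3) Σ_n K_n ρ₀ K_n† = ρ, where ρ₀ = |ψ₀⟩⟨ψ₀| with ψ₀ = (1/√2)(e₀ + e₁) ∈ ℂ³ and ρ = (1/2)·[[1−q², √(1−q²), 0], [√(1−q²), 1, 0], [0, 0, q²]]. -/

import Mathlib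

open Matrix

set_option maxHeartbeats 1000000 in
/-- There is a time-translation covariant, trace-preserving, Gibbs-preserving
family of Kraus operators (an enhanced thermal operation) mapping
`ρ₀ = |ψ₀⟩⟨ψ₀|`, `ψ₀ = (e₀+e₁)/√2`, to the state `ρ` with populations
`((1−q²)/2, 1/2, q²/2)` and coherence `ρ₁₀ = (1/2)√(1−q²)`. -/
theorem exists_ento_reaching_extreme_state
    (q : ℝ) (hq : q ∈ Set.Ioo (0 : ℝ) 1) :
    ∃ K : ℤ → Matrix (Fin 3) (Fin 3) ℂ,
      (∀ n ∈ Finset.Icc (-2 : ℤ) 2, ∀ i j : Fin 3,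
        ((i : ℕ) : ℤ) - ((j : ℕ) : ℤ) ≠ n → K n i j = 0) ∧
      (∑ n ∈ Finset.Icc (-2 : ℤ) 2, (K n)ᴴ * K n = 1) ∧
      (∑ n ∈ Finset.Icc (-2 : ℤ) 2,
          K n * ((1 + q + q ^ 2 : ℂ)⁻¹ •
            Matrix.diagonal ![1, (q : ℂ), (q : ℂ) ^ 2]) * (K n)ᴴ
        = (1 + q + q ^ 2 : ℂ)⁻¹ • Matrix.diagonal ![1, (q : ℂ), (q : ℂ) ^ 2]) ∧
      (∑ n ∈ Finset.Icc (-2 : ℤ) 2,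
          K n * (Matrix.vecMulVec
            ![(1 / Real.sqrt 2 : ℂ), (1 / Real.sqrt 2 : ℂ), 0]
            (star ![(1 / Real.sqrt 2 : ℂ), (1 / Real.sqrt 2 : ℂ), 0])) * (K n)ᴴ
        = (1 / 2 : ℂ) •
            !![((1 - q ^ 2 : ℝ) : ℂ), ((Real.sqrt (1 - q ^ 2) : ℝ) : ℂ), 0;
               ((Real.sqrt (1 - q ^ 2) : ℝ) : ℂ), 1, 0;
               0, 0, ((q ^ 2 : ℝ) : ℂ)]) := by
  obtain ⟨hq0, hq1⟩ := hq
  have h1q : (0:ℝ) ≤ 1 - q ^ 2 := by nlinarith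
  have hs2 : Real.sqrt (1 - q ^ 2) * Real.sqrt (1 - q ^ 2) = 1 - q ^ 2 :=
    Real.mul_self_sqrt h1q
  have h2 : Real.sqrt 2 * Real.sqrt 2 = 2 := Real.mul_self_sqrt (by norm_num)
  have h2ne : (Real.sqrt 2 : ℂ) ≠ 0 := by
    simpa using Real.sqrt_ne_zero'.mpr (by norm_num : (0:ℝ) < 2)
  have hI : Finset.Icc (-2 : ℤ) 2 = {-2,-1,0,1,2} := by decide
  refine ⟨fun n => if n = 0 then !![((Real.sqrt (1 - q ^ 2):ℝ):ℂ),0,0;0,1,0;0,0,0]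
    else if n = 2 then !![0,0,0;0,0,0;(q:ℂ),0,0]
    else if n = -2 then !![0,0,1;0,0,0;0,0,0] else 0, ?_, ?_, ?_, ?_⟩
  · intro n hn i j hij
    beta_reduce
    split_ifs with h0 h2' hm2 <;> subst_vars <;>
      [skip; skip; skip; rfl] <;>
    fin_cases i <;> fin_cases j <;> simp_all [Matrix.vecHead, Matrix.vecTail]
  · rw [hI]
    norm_num [Finset.sum_insert, Finset.mem_insert]
    ext i j
    fin_cases i <;> fin_cases j <;>
      simp [Matrix.mul_apply, Fin.sum_univ_three, Matrix.one_apply,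
        Matrix.vecHead, Matrix.vecTail, ← Complex.ofReal_mul, hs2] <;>
      push_cast <;> ring
  · have hD : (∑ n ∈ Finset.Icc (-2 : ℤ) 2,
        (if n = 0 then !![((Real.sqrt (1 - q ^ 2):ℝ):ℂ),0,0;0,1,0;0,0,0]
      else if n = 2 then !![0,0,0;0,0,0;(q:ℂ),0,0]
      else if n = -2 then !![0,0,1;0,0,0;0,0,0] else 0 : Matrix (Fin 3) (Fin 3) ℂ) *
       (Matrix.diagonal ![1, (q : ℂ), (q : ℂ) ^ 2]) *
        ((if n = 0 then !![((Real.sqrt (1 - q ^ 2):ℝ):ℂ),0,0;0,1,0;0,0,0]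
      else if n = 2 then !![0,0,0;0,0,0;(q:ℂ),0,0]
      else if n = -2 then !![0,0,1;0,0,0;0,0,0] else 0 : Matrix (Fin 3) (Fin 3) ℂ))ᴴ
          = Matrix.diagonal ![1, (q : ℂ), (q : ℂ) ^ 2]) := by
      rw [hI]
      norm_num [Finset.sum_insert, Finset.mem_insert]
      ext i j
      fin_cases i <;> fin_cases j <;>
        simp [Matrix.mul_apply, Fin.sum_univ_three, Matrix.diagonal_apply,
          Matrix.vecHead, Matrix.vecTail, Matrix.vecMul, dotProduct,
          ← Complex.ofReal_mul, hs2] <;>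
        push_cast <;> ring
    calc _ = (1 + (q:ℂ) + q ^ 2)⁻¹ • ∑ n ∈ Finset.Icc (-2 : ℤ) 2,
        (if n = 0 then !![((Real.sqrt (1 - q ^ 2):ℝ):ℂ),0,0;0,1,0;0,0,0]
      else if n = 2 then !![0,0,0;0,0,0;(q:ℂ),0,0]
      else if n = -2 then !![0,0,1;0,0,0;0,0,0] else 0 : Matrix (Fin 3) (Fin 3) ℂ) *
       (Matrix.diagonal ![1, (q : ℂ), (q : ℂ) ^ 2]) *
        ((if n = 0 then !![((Real.sqrt (1 - q ^ 2):ℝ):ℂ),0,0;0,1,0;0,0,0]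
      else if n = 2 then !![0,0,0;0,0,0;(q:ℂ),0,0]
      else if n = -2 then !![0,0,1;0,0,0;0,0,0] else 0 : Matrix (Fin 3) (Fin 3) ℂ))ᴴ := by
          rw [Finset.smul_sum]
          refine Finset.sum_congr rfl fun n _ => ?_
          rw [Matrix.mul_smul, Matrix.smul_mul]
      _ = _ := by rw [hD]
  · rw [hI]
    norm_num [Finset.sum_insert, Finset.mem_insert, -Matrix.cons_vecMulVec, -Matrix.cons_mul, -Matrix.vecMulVec_cons]
    ext i j
    fin_cases i <;> fin_cases j <;>
      simp [Matrix.mul_apply, Fin.sum_univ_three, Matrix.vecMulVec_apply,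
        Matrix.smul_apply, Pi.star_apply, Matrix.vecHead, Matrix.vecTail,
        Matrix.vecMul, dotProduct, div_mul_div_comm, -Matrix.cons_vecMulVec, -Matrix.vecMulVec_cons] <;>
      field_simp <;>
      rw [show ((Real.sqrt 2 : ℂ) ^ 2) = 2 by
        rw [← Complex.ofReal_pow, Real.sq_sqrt (by norm_num)]; norm_num] <;>
      push_cast [← Complex.ofReal_pow, Real.sq_sqrt h1q, ← Complex.ofReal_mul, hs2] <;> norm_num <;> first | tauto | ring
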